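/- arXiv:2302.09832 — 3 statements merged into one kernel-verified Lean document; each statement's English description precedes it below -/
import Mathlib

section
/- Let n ≥ 3, 2 ≤ s ≤ n, and i ∈ [n]. If Ω is a uniformly random s-element subset of [n] containing i, then for vectors x_1,…,x_n ∈ ℝ^d, E[‖∑_{j∈Ω\{i}} x_j‖²] = ((s−1)/(n−1))·((n−s)/(n−2))·∑_{j≠i}‖x_j‖² + ((s−1)/(n−1))·((s−2)/(n−2))·‖∑_{j≠i} x_j‖². -/
open Finset
set_option maxHeartbeats 1000000

lemma count_subsets {α : Type*} [DecidableEq α] (u T : Finset α)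
    (hT : T ⊆ u) {s : ℕ} (hs : T.card ≤ s) :
    ((u.powersetCard s).filter (fun Ω => T ⊆ Ω)).card
      = (u.card - T.card).choose (s - T.card) := by
  rw [← card_sdiff_of_subset hT, ← card_powersetCard (s - T.card) (u \ T)]
  apply Finset.card_bij' (fun Ω _ => Ω \ T) (fun A _ => A ∪ T)
  · intro Ω hΩ
    simp only [mem_filter, mem_powersetCard] at hΩ
    simp only [mem_powersetCard]
    exact ⟨sdiff_subset_sdiff hΩ.1.1 le_rfl, by rw [card_sdiff_of_subset hΩ.2, hΩ.1.2]⟩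
  · intro A hA
    simp only [mem_powersetCard] at hA
    have hdisj : Disjoint A T := disjoint_of_subset_left hA.1 sdiff_disjoint
    simp only [mem_filter, mem_powersetCard]
    refine ⟨⟨union_subset (hA.1.trans sdiff_subset) hT, ?_⟩, subset_union_right⟩
    rw [card_union_of_disjoint hdisj, hA.2, Nat.sub_add_cancel hs]
  · intro Ω hΩ
    simp only [mem_filter, mem_powersetCard] at hΩ
    exact sdiff_union_of_subset hΩ.2
  · intro A hA
    simp only [mem_powersetCard] at hA
    have hdisj : Disjoint A T := disjoint_of_subset_left hA.1 sdiff_disjoint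
    rw [union_sdiff_right, sdiff_eq_self_of_disjoint hdisj]

lemma count_subsets_zero {α : Type*} [DecidableEq α] (u T : Finset α)
    {s : ℕ} (hs : s < T.card) :
    ((u.powersetCard s).filter (fun Ω => T ⊆ Ω)).card = 0 := by
  rw [card_eq_zero, filter_eq_empty_iff]
  intro Ω hΩ hTΩ
  simp only [mem_powersetCard] at hΩ
  exact absurd (card_le_card hTΩ) (by omega)

/-- For `Ω` a uniformly random `s`-element subset of `[n]` containing `i`:
`E‖∑_{j∈Ω\{i}} x_j‖² = ((s−1)/(n−1))((n−s)/(n−2)) ∑_{j≠i}‖x_j‖²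
  + ((s−1)/(n−1))((s−2)/(n−2)) ‖∑_{j≠i} x_j‖²`. -/
theorem uniform_subset_containing_sq_norm_sum
    {d n : ℕ} (hn : 3 ≤ n) (s : ℕ) (hs : 2 ≤ s) (hsn : s ≤ n) (i : Fin n)
    (x : Fin n → EuclideanSpace ℝ (Fin d)) :
    ((((Finset.univ : Finset (Fin n)).powersetCard s).filter (fun Ω => i ∈ Ω)).card : ℝ)⁻¹ *
      ∑ Ω ∈ ((Finset.univ : Finset (Fin n)).powersetCard s).filter (fun Ω => i ∈ Ω),
        ‖∑ j ∈ Ω.erase i, x j‖ ^ 2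
    = (((s : ℝ) - 1) / ((n : ℝ) - 1)) * (((n : ℝ) - s) / ((n : ℝ) - 2)) *
        (∑ j ∈ Finset.univ.erase i, ‖x j‖ ^ 2)
      + (((s : ℝ) - 1) / ((n : ℝ) - 1)) * (((s : ℝ) - 2) / ((n : ℝ) - 2)) *
        ‖∑ j ∈ Finset.univ.erase i, x j‖ ^ 2 := by
  classical
  set E : Finset (Fin n) := Finset.univ.erase i with hE
  set F : Finset (Finset (Fin n)) :=
    ((Finset.univ : Finset (Fin n)).powersetCard s).filter (fun Ω => i ∈ Ω) with hF
  set c1 : ℕ := (n-1).choose (s-1) with hc1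
  set c2 : ℕ := (n-2).choose (s-2) with hc2
  set c3 : ℕ := if 3 ≤ s then (n-3).choose (s-3) else 0 with hc3
  -- cardinality of F
  have hcardF : F.card = c1 := by
    have : F = ((Finset.univ : Finset (Fin n)).powersetCard s).filter
        (fun Ω => ({i} : Finset (Fin n)) ⊆ Ω) := by
      simp [hF, singleton_subset_iff]
    rw [this, count_subsets _ _ (subset_univ _) (by simp; omega)]
    simp [hc1, card_univ]
  -- square norm expansion of inner sums
  have hsq : ∀ Ω ∈ F, (‖∑ j ∈ Ω.erase i, x j‖ : ℝ) ^ 2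
      = ∑ j ∈ E, ∑ k ∈ E, (if j ∈ Ω ∧ k ∈ Ω then (inner ℝ (x j) (x k) : ℝ) else 0) := by
    intro Ω hΩ
    have hrw : ∑ j ∈ Ω.erase i, x j = ∑ j ∈ E, (if j ∈ Ω then x j else 0) := by
      rw [Finset.sum_ite_mem]
      apply Finset.sum_congr _ (fun _ _ => rfl)
      ext j; simp [hE, mem_erase, and_comm]
    rw [hrw, ← real_inner_self_eq_norm_sq, sum_inner]
    refine Finset.sum_congr rfl fun j _ => ?_
    rw [inner_sum]
    refine Finset.sum_congr rfl fun k _ => ?_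
    split_ifs with h1 h2 h2 <;> simp_all
  -- counting for pairs
  have hcount : ∀ j ∈ E, ∀ k ∈ E,
      (F.filter (fun Ω => j ∈ Ω ∧ k ∈ Ω)).card = if j = k then c2 else c3 := by
    intro j hj k hk
    have hji : j ≠ i := by simpa [hE] using hj
    have hki : k ≠ i := by simpa [hE] using hk
    have hFF : F.filter (fun Ω => j ∈ Ω ∧ k ∈ Ω)
        = ((Finset.univ : Finset (Fin n)).powersetCard s).filter
            (fun Ω => ({i, j, k} : Finset (Fin n)) ⊆ Ω) := by
      rw [hF, filter_filter]
      apply filter_congr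
      intro Ω _
      simp [insert_subset_iff, and_assoc]
    rw [hFF]
    by_cases hjk : j = k
    · subst hjk
      have hT : ({i, j, j} : Finset (Fin n)) = {i, j} := by simp
      have hTc : ({i, j} : Finset (Fin n)).card = 2 := by
        rw [card_insert_of_notMem (by simp [Ne.symm hji]), card_singleton]
      rw [hT, if_pos rfl, count_subsets _ _ (subset_univ _) (by omega), hTc]
      simp [hc2, card_univ]
    · have hTc : ({i, j, k} : Finset (Fin n)).card = 3 := by
        rw [card_insert_of_notMem (by simp [Ne.symm hji, Ne.symm hki]),
            card_insert_of_notMem (by simp [hjk]), card_singleton]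
      rw [if_neg hjk]
      by_cases h3 : 3 ≤ s
      · rw [count_subsets _ _ (subset_univ _) (by omega), hTc]
        simp [hc3, h3, card_univ]
      · rw [count_subsets_zero _ _ (by omega)]
        simp [hc3, h3]
  -- the main sum
  have hS : ∑ Ω ∈ F, (‖∑ j ∈ Ω.erase i, x j‖ : ℝ) ^ 2
      = ∑ j ∈ E, ∑ k ∈ E,
          ((if j = k then c2 else c3 : ℕ) : ℝ) * (inner ℝ (x j) (x k) : ℝ) := by
    rw [Finset.sum_congr rfl hsq, Finset.sum_comm]
    refine Finset.sum_congr rfl fun j hj => ?_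
    rw [Finset.sum_comm]
    refine Finset.sum_congr rfl fun k hk => ?_
    rw [← Finset.sum_filter, Finset.sum_const, hcount j hj k hk]
    simp [nsmul_eq_mul]
  -- split diagonal
  have hQ : ∑ j ∈ E, ∑ k ∈ E, (inner ℝ (x j) (x k) : ℝ) = ‖∑ j ∈ E, x j‖ ^ 2 := by
    rw [← real_inner_self_eq_norm_sq, sum_inner]
    exact Finset.sum_congr rfl fun j _ => by rw [inner_sum]
  have hP : ∑ j ∈ E, (inner ℝ (x j) (x j) : ℝ) = ∑ j ∈ E, ‖x j‖ ^ 2 :=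
    Finset.sum_congr rfl fun j _ => real_inner_self_eq_norm_sq _
  have hS2 : ∑ Ω ∈ F, (‖∑ j ∈ Ω.erase i, x j‖ : ℝ) ^ 2
      = (c3 : ℝ) * ‖∑ j ∈ E, x j‖ ^ 2 + ((c2 : ℝ) - c3) * ∑ j ∈ E, ‖x j‖ ^ 2 := by
    rw [hS, ← hQ, ← hP, Finset.mul_sum, Finset.mul_sum, ← Finset.sum_add_distrib]
    refine Finset.sum_congr rfl fun j hj => ?_
    have hdiag : ((c2 : ℝ) - c3) * (inner ℝ (x j) (x j) : ℝ)
        = ∑ k ∈ E, (if k = j then ((c2 : ℝ) - c3) * (inner ℝ (x j) (x k) : ℝ) else 0) := by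
      rw [Finset.sum_ite_eq' E j (fun k => ((c2 : ℝ) - c3) * (inner ℝ (x j) (x k) : ℝ)),
        if_pos hj]
    rw [hdiag, Finset.mul_sum, ← Finset.sum_add_distrib]
    refine Finset.sum_congr rfl fun k _ => ?_
    by_cases h : j = k
    · subst h; simp; ring
    · simp [h, Ne.symm h]
  -- arithmetic identities
  obtain ⟨N, rfl⟩ : ∃ N, n = N + 3 := ⟨n - 3, by omega⟩
  obtain ⟨t, rfl⟩ : ∃ t, s = t + 2 := ⟨s - 2, by omega⟩
  have ht : t ≤ N + 1 := by omega
  have hc1' : c1 = (N + 2).choose (t + 1) := by norm_num [hc1]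
  have hc2' : c2 = (N + 1).choose t := by rw [hc2]; congr 1 <;> omega
  have id1 : (N + 2) * c2 = (N + 2).choose (t + 1) * (t + 1) := by
    rw [hc2']; exact Nat.add_one_mul_choose_eq (N + 1) t
  have id2 : (N + 2) * ((N + 1) * c3) = (t + 1) * t * c1 := by
    rcases Nat.eq_zero_or_pos t with rfl | htpos
    · have : c3 = 0 := by norm_num [hc3]
      simp [this]
    · obtain ⟨r, rfl⟩ : ∃ r, t = r + 1 := ⟨t - 1, by omega⟩
      have hc3' : c3 = N.choose r := by rw [hc3, if_pos (by omega)]; congr 1 <;> omega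
      have e1 : (N + 1) * N.choose r = (N + 1).choose (r + 1) * (r + 1) :=
        Nat.add_one_mul_choose_eq N r
      have e2 : (N + 2) * (N + 1).choose (r + 1) = (N + 2).choose (r + 2) * (r + 2) :=
        Nat.add_one_mul_choose_eq (N + 1) (r + 1)
      calc (N + 2) * ((N + 1) * c3) = (N + 2) * ((N + 1) * N.choose r) := by rw [hc3']
        _ = (N + 2) * ((N + 1).choose (r + 1) * (r + 1)) := by rw [e1]
        _ = ((N + 2) * (N + 1).choose (r + 1)) * (r + 1) := by ring
        _ = ((N + 2).choose (r + 2) * (r + 2)) * (r + 1) := by rw [e2]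
        _ = (r + 1 + 1) * (r + 1) * c1 := by rw [hc1']; ring
  have hc1pos : 0 < c1 := by rw [hc1']; exact Nat.choose_pos (by omega)
  have hc1ne : (c1 : ℝ) ≠ 0 := by positivity
  have hN2 : ((N : ℝ) + 2) ≠ 0 := by positivity
  have hN1 : ((N : ℝ) + 1) ≠ 0 := by positivity
  have id1R : ((N : ℝ) + 2) * c2 = (c1 : ℝ) * (t + 1) := by
    rw [hc1']; exact_mod_cast id1
  have id2R : ((N : ℝ) + 2) * (((N : ℝ) + 1) * c3) = ((t : ℝ) + 1) * t * c1 := by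
    exact_mod_cast id2
  have ec2 : (c2 : ℝ) = ((t : ℝ) + 1) * c1 / ((N : ℝ) + 2) := by
    field_simp; linarith [id1R]
  have ec3 : (c3 : ℝ) = ((t : ℝ) + 1) * t * c1 / (((N : ℝ) + 2) * ((N : ℝ) + 1)) := by
    field_simp; linarith [id2R]
  have cA : (c1 : ℝ)⁻¹ * ((c2 : ℝ) - c3)
      = (((t : ℝ) + 1) / ((N : ℝ) + 2)) * ((((N : ℝ) + 1) - t) / ((N : ℝ) + 1)) := by
    rw [ec2, ec3]; field_simp
  have cB : (c1 : ℝ)⁻¹ * (c3 : ℝ)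
      = (((t : ℝ) + 1) / ((N : ℝ) + 2)) * ((t : ℝ) / ((N : ℝ) + 1)) := by
    rw [ec3]; field_simp; try ring
  rw [hS2, hcardF]
  calc (c1 : ℝ)⁻¹ * ((c3 : ℝ) * ‖∑ j ∈ E, x j‖ ^ 2 + ((c2 : ℝ) - c3) * ∑ j ∈ E, ‖x j‖ ^ 2)
      = ((c1 : ℝ)⁻¹ * ((c2 : ℝ) - c3)) * ∑ j ∈ E, ‖x j‖ ^ 2
        + ((c1 : ℝ)⁻¹ * (c3 : ℝ)) * ‖∑ j ∈ E, x j‖ ^ 2 := by ring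
    _ = _ := by rw [cA, cB]; push_cast; ring
end

section
/- With the same random vector d as above (Bernoulli(p) activation, uniform s-subset Ω, scaling a = (n−1)/(p(s−1))), one has E[∑_{i=1}^n ‖d_i‖²] = ((n−1)/(p(s−1)))·∑_{i=1}^n ‖x̂_i − (1/n)∑_{j=1}^n x̂_j‖². Consequently, writing ω = (n−1)/(p(s−1)) − 1 and (Wx̂)_i = x̂_i − (1/n)∑_j x̂_j, it holds that E[‖d − Wx̂‖²] = ω‖Wx̂‖². -/
open Finset

lemma tamuna_count {α : Type*} [DecidableEq α] (U T : Finset α) (hT : T ⊆ U)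
    {s : ℕ} (hs : T.card ≤ s) :
    ((U.powersetCard s).filter (fun Ω => T ⊆ Ω)).card
      = (U.card - T.card).choose (s - T.card) := by
  rw [← Finset.card_sdiff_of_subset hT, ← Finset.card_powersetCard]
  apply Finset.card_bij (fun Ω _ => Ω \ T)
  · intro Ω hΩ
    simp only [mem_filter, Finset.mem_powersetCard] at hΩ ⊢
    exact ⟨Finset.sdiff_subset_sdiff hΩ.1.1 le_rfl,
      by rw [Finset.card_sdiff_of_subset hΩ.2, hΩ.1.2]⟩
  · intro Ω1 h1 Ω2 h2 h
    simp only [mem_filter, Finset.mem_powersetCard] at h1 h2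
    have e1 : Ω1 \ T ∪ T = Ω1 := Finset.sdiff_union_of_subset h1.2
    have e2 : Ω2 \ T ∪ T = Ω2 := Finset.sdiff_union_of_subset h2.2
    rw [← e1, ← e2, h]
  · intro Ψ hΨ
    simp only [Finset.mem_powersetCard] at hΨ
    have hdisj : Disjoint Ψ T := Finset.disjoint_of_subset_left hΨ.1 Finset.sdiff_disjoint
    refine ⟨Ψ ∪ T, ?_, ?_⟩
    · simp only [mem_filter, Finset.mem_powersetCard]
      refine ⟨⟨Finset.union_subset (hΨ.1.trans (Finset.sdiff_subset)) hT, ?_⟩,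
        Finset.subset_union_right⟩
      rw [Finset.card_union_of_disjoint hdisj, hΨ.2]
      omega
    · rw [Finset.union_sdiff_cancel_right hdisj]

lemma tamuna_swap1 {M : Type*} [AddCommMonoid M] {α : Type*} [DecidableEq α]
    (U : Finset α) (s : ℕ) (f : α → M) :
    ∑ Ω ∈ U.powersetCard s, ∑ j ∈ Ω, f j
      = ∑ j ∈ U, (((U.powersetCard s).filter (fun Ω => j ∈ Ω)).card) • f j := by
  have h : ∀ Ω ∈ U.powersetCard s, ∑ j ∈ Ω, f j
      = ∑ j ∈ U, if j ∈ Ω then f j else 0 := by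
    intro Ω hΩ
    rw [Finset.sum_ite_mem, Finset.inter_eq_right.2 (Finset.mem_powersetCard.1 hΩ).1]
  rw [Finset.sum_congr rfl h, Finset.sum_comm]
  refine Finset.sum_congr rfl fun j _ => ?_
  rw [← Finset.sum_filter, Finset.sum_const]

lemma tamuna_swap2 {M : Type*} [AddCommMonoid M] {α : Type*} [DecidableEq α]
    (U : Finset α) (s : ℕ) (g : α → α → M) :
    ∑ Ω ∈ U.powersetCard s, ∑ j ∈ Ω, ∑ k ∈ Ω, g j k
      = ∑ j ∈ U, ∑ k ∈ U,
          (((U.powersetCard s).filter (fun Ω => j ∈ Ω ∧ k ∈ Ω)).card) • g j k := by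
  have h : ∀ Ω ∈ U.powersetCard s, ∑ j ∈ Ω, ∑ k ∈ Ω, g j k
      = ∑ j ∈ U, ∑ k ∈ U, if j ∈ Ω ∧ k ∈ Ω then g j k else 0 := by
    intro Ω hΩ
    have hsub := (Finset.mem_powersetCard.1 hΩ).1
    have : ∀ j ∈ U, (∑ k ∈ U, if j ∈ Ω ∧ k ∈ Ω then g j k else 0)
        = if j ∈ Ω then ∑ k ∈ Ω, g j k else 0 := by
      intro j _
      by_cases hj : j ∈ Ω
      · simp only [hj, true_and, if_true]
        rw [Finset.sum_ite_mem, Finset.inter_eq_right.2 hsub]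
      · simp [hj]
    rw [Finset.sum_congr rfl this, Finset.sum_ite_mem, Finset.inter_eq_right.2 hsub]
  rw [Finset.sum_congr rfl h, Finset.sum_comm]
  refine Finset.sum_congr rfl fun j _ => ?_
  rw [Finset.sum_comm]
  refine Finset.sum_congr rfl fun k _ => ?_
  rw [← Finset.sum_filter, Finset.sum_const]

lemma tamuna_choose_id {n s : ℕ} (h1 : 1 ≤ n) (h2 : 1 ≤ s) :
    n * (n-1).choose (s-1) = n.choose s * s := by
  have := Nat.add_one_mul_choose_eq (n-1) (s-1)
  have e1 : n - 1 + 1 = n := by omega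
  have e2 : s - 1 + 1 = s := by omega
  rwa [e1, e2] at this

set_option maxHeartbeats 1000000 in
/-- Second moment of the TAMUNA random vector `d`:
`E[∑_i ‖d_i‖²] = ((n−1)/(p(s−1))) ∑_i ‖(Wx̂)_i‖²`, and consequently
`E[‖d − Wx̂‖²] = ω ‖Wx̂‖²` with `ω = (n−1)/(p(s−1)) − 1`. -/
theorem tamuna_d_second_moment
    {d n : ℕ} (hn : 3 ≤ n) (s : ℕ) (hs : 2 ≤ s) (hsn : s ≤ n)
    (p : ℝ) (hp0 : 0 < p) (hp1 : p ≤ 1)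
    (a ω : ℝ) (ha : a = ((n : ℝ) - 1) / (p * ((s : ℝ) - 1)))
    (hω : ω = ((n : ℝ) - 1) / (p * ((s : ℝ) - 1)) - 1)
    (xh : Fin n → EuclideanSpace ℝ (Fin d))
    (Wxh : Fin n → EuclideanSpace ℝ (Fin d))
    (hWxh : ∀ i, Wxh i = xh i - (n : ℝ)⁻¹ • ∑ j, xh j)
    (D : Finset (Fin n) → Fin n → EuclideanSpace ℝ (Fin d))
    (hD : ∀ Ω i, D Ω i =
      if i ∈ Ω then a • (xh i - (s : ℝ)⁻¹ • ∑ j ∈ Ω, xh j) else 0) :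
    (p * ((((Finset.univ : Finset (Fin n)).powersetCard s).card : ℝ)⁻¹ *
        ∑ Ω ∈ (Finset.univ : Finset (Fin n)).powersetCard s, ∑ i, ‖D Ω i‖ ^ 2)
      = (((n : ℝ) - 1) / (p * ((s : ℝ) - 1))) * ∑ i, ‖Wxh i‖ ^ 2) ∧
    (p * ((((Finset.univ : Finset (Fin n)).powersetCard s).card : ℝ)⁻¹ *
        ∑ Ω ∈ (Finset.univ : Finset (Fin n)).powersetCard s, ∑ i, ‖D Ω i - Wxh i‖ ^ 2)
      + (1 - p) * ∑ i, ‖(0 : EuclideanSpace ℝ (Fin d)) - Wxh i‖ ^ 2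
      = ω * ∑ i, ‖Wxh i‖ ^ 2) := by
  classical
  have hp : p ≠ 0 := ne_of_gt hp0
  have hn0 : (n : ℝ) ≠ 0 := by positivity
  have hs0 : (s : ℝ) ≠ 0 := by
    have : (0:ℝ) < s := by exact_mod_cast (by omega : 0 < s)
    exact ne_of_gt this
  have hn1 : (n : ℝ) - 1 ≠ 0 := by
    have : (3:ℝ) ≤ n := by exact_mod_cast hn
    linarith
  have hs1 : (s : ℝ) - 1 ≠ 0 := by
    have : (2:ℝ) ≤ s := by exact_mod_cast hs
    linarith
  set K := (Finset.univ : Finset (Fin n)).powersetCard s with hK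
  set S : EuclideanSpace ℝ (Fin d) := ∑ j, xh j with hS
  set A : ℝ := ∑ j, ‖xh j‖ ^ 2 with hA
  set P : ℝ := ∑ j, ∑ k ∈ Finset.univ.erase j, (inner ℝ (xh j) (xh k) : ℝ) with hP
  set c1 : ℝ := ((n-1).choose (s-1) : ℝ) with hc1def
  set c2 : ℝ := ((n-2).choose (s-2) : ℝ) with hc2def
  set N : ℝ := (K.card : ℝ) with hNdef
  have hNnat : K.card = n.choose s := by
    rw [hK, Finset.card_powersetCard, card_univ, Fintype.card_fin]
  have hN0 : N ≠ 0 := by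
    rw [hNdef, hNnat]
    exact Nat.cast_ne_zero.2 (Nat.choose_pos hsn).ne'
  -- choose identities over ℝ
  have hid1 : (n : ℝ) * c1 = N * s := by
    rw [hNdef, hNnat, hc1def]
    exact_mod_cast congrArg (Nat.cast : ℕ → ℝ)
      (tamuna_choose_id (by omega) (by omega))
  have hid2 : ((n : ℝ) - 1) * c2 = c1 * ((s : ℝ) - 1) := by
    have hnat : (n-1) * (n-2).choose (s-2) = (n-1).choose (s-1) * (s-1) := by
      have := tamuna_choose_id (n := n-1) (s := s-1) (by omega) (by omega)
      have e1 : n - 1 - 1 = n - 2 := by omega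
      have e2 : s - 1 - 1 = s - 2 := by omega
      rwa [e1, e2] at this
    rw [hc1def, hc2def]
    have cn : ((n-1 : ℕ) : ℝ) = (n : ℝ) - 1 := by
      rw [Nat.cast_sub (by omega)]; norm_num
    have cs : ((s-1 : ℕ) : ℝ) = (s : ℝ) - 1 := by
      rw [Nat.cast_sub (by omega)]; norm_num
    rw [← cn, ← cs]
    exact_mod_cast congrArg (Nat.cast : ℕ → ℝ) hnat
  -- derived forms
  have e1 : c1 = (s : ℝ) * N / n := by
    rw [eq_div_iff hn0]; linarith [hid1]
  have e2 : c2 = ((s : ℝ) - 1) * c1 / ((n : ℝ) - 1) := by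
    rw [eq_div_iff hn1]; linarith [hid2]
  -- counting
  have cnt1 : ∀ j : Fin n, (K.filter (fun Ω => j ∈ Ω)).card = (n-1).choose (s-1) := by
    intro j
    have := tamuna_count (Finset.univ : Finset (Fin n)) {j} (by simp)
      (s := s) (by simp; omega)
    simp only [Finset.card_singleton, card_univ, Fintype.card_fin] at this
    rw [← this, hK]
    congr 1
    apply Finset.filter_congr
    intro Ω _
    simp [Finset.singleton_subset_iff]
  have cnt2 : ∀ j k : Fin n, j ≠ k →
      (K.filter (fun Ω => j ∈ Ω ∧ k ∈ Ω)).card = (n-2).choose (s-2) := by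
    intro j k hjk
    have := tamuna_count (Finset.univ : Finset (Fin n)) {j, k} (by simp)
      (s := s) (by rw [Finset.card_pair hjk]; omega)
    simp only [Finset.card_pair hjk, card_univ, Fintype.card_fin] at this
    rw [← this, hK]
    congr 1
    apply Finset.filter_congr
    intro Ω _
    simp [Finset.insert_subset_iff]
  have cntdiag : ∀ j : Fin n,
      (K.filter (fun Ω => j ∈ Ω ∧ j ∈ Ω)).card = (n-1).choose (s-1) := by
    intro j
    rw [← cnt1 j]
    congr 1
    simp
  -- generic single-sum
  have sumA : ∀ f : Fin n → ℝ, ∑ Ω ∈ K, ∑ j ∈ Ω, f j = c1 * ∑ j, f j := by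
    intro f
    rw [hK, tamuna_swap1]
    rw [Finset.mul_sum]
    refine Finset.sum_congr rfl fun j _ => ?_
    rw [← hK, cnt1 j, nsmul_eq_mul, hc1def]
  -- norm of subset sums as double inner sums
  have hnorm_sum : ∀ Ω : Finset (Fin n), ‖∑ j ∈ Ω, xh j‖ ^ 2
      = ∑ j ∈ Ω, ∑ k ∈ Ω, (inner ℝ (xh j) (xh k) : ℝ) := by
    intro Ω
    rw [← real_inner_self_eq_norm_sq, sum_inner]
    exact Finset.sum_congr rfl fun j _ => inner_sum _ _ _
  have hB : ‖S‖ ^ 2 = A + P := by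
    rw [hS, hnorm_sum, hA, hP, ← Finset.sum_add_distrib]
    refine Finset.sum_congr rfl fun j _ => ?_
    rw [← Finset.add_sum_erase _ _ (Finset.mem_univ j), real_inner_self_eq_norm_sq]
  have sumB : ∑ Ω ∈ K, ‖∑ j ∈ Ω, xh j‖ ^ 2 = c1 * A + c2 * P := by
    rw [Finset.sum_congr rfl (fun Ω _ => hnorm_sum Ω), hK, tamuna_swap2]
    have key : ∀ j : Fin n,
        (∑ k, ((((Finset.univ : Finset (Fin n)).powersetCard s).filter
            (fun Ω => j ∈ Ω ∧ k ∈ Ω)).card) • (inner ℝ (xh j) (xh k) : ℝ))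
        = c1 * ‖xh j‖ ^ 2 + c2 * ∑ k ∈ Finset.univ.erase j, (inner ℝ (xh j) (xh k) : ℝ) := by
      intro j
      rw [← Finset.add_sum_erase _ _ (Finset.mem_univ j)]
      congr 1
      · rw [← hK, cntdiag j, nsmul_eq_mul, hc1def, real_inner_self_eq_norm_sq]
      · rw [Finset.mul_sum]
        refine Finset.sum_congr rfl fun k hk => ?_
        have hjk : j ≠ k := (Finset.ne_of_mem_erase hk).symm
        rw [← hK, cnt2 j k hjk, nsmul_eq_mul, hc2def]
    rw [Finset.sum_congr rfl (fun j _ => key j), Finset.sum_add_distrib,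
      ← Finset.mul_sum, ← Finset.mul_sum, ← hA, ← hP]
  -- ∑ ‖Wxh‖²
  have hRW : ∑ i, ‖Wxh i‖ ^ 2 = A - (n : ℝ)⁻¹ * (A + P) := by
    have h1 : ∀ i : Fin n, ‖Wxh i‖ ^ 2
        = ‖xh i‖ ^ 2 - 2 * ((n:ℝ)⁻¹ * (inner ℝ (xh i) S : ℝ)) + ((n:ℝ)⁻¹)^2 * ‖S‖^2 := by
      intro i
      rw [hWxh i, norm_sub_sq_real, real_inner_smul_right, norm_smul, mul_pow,
        Real.norm_eq_abs, sq_abs]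
    rw [Finset.sum_congr rfl (fun i _ => h1 i), Finset.sum_add_distrib,
      Finset.sum_sub_distrib, Finset.sum_const, card_univ, Fintype.card_fin, nsmul_eq_mul]
    have h2 : ∑ i, 2 * ((n:ℝ)⁻¹ * (inner ℝ (xh i) S : ℝ)) = 2 * ((n:ℝ)⁻¹ * ‖S‖^2) := by
      rw [← Finset.mul_sum]
      congr 1
      rw [← Finset.mul_sum]
      congr 1
      rw [← sum_inner, ← hS, real_inner_self_eq_norm_sq]
    rw [h2, hB, ← hA]
    field_simp
    ring
  -- per-Ω second moment
  have hDsum : ∀ Ω ∈ K, ∑ i, ‖D Ω i‖ ^ 2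
      = a^2 * ((∑ j ∈ Ω, ‖xh j‖ ^ 2) - (s:ℝ)⁻¹ * ‖∑ j ∈ Ω, xh j‖^2) := by
    intro Ω hΩ
    obtain ⟨hsub, hcard⟩ := Finset.mem_powersetCard.1 hΩ
    have step1 : ∑ i, ‖D Ω i‖ ^ 2
        = ∑ i ∈ Ω, ‖a • (xh i - (s:ℝ)⁻¹ • ∑ j ∈ Ω, xh j)‖ ^ 2 := by
      have h : ∀ i : Fin n, ‖D Ω i‖ ^ 2
          = if i ∈ Ω then ‖a • (xh i - (s:ℝ)⁻¹ • ∑ j ∈ Ω, xh j)‖ ^ 2 else 0 := by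
        intro i; rw [hD]; split <;> simp
      rw [Finset.sum_congr rfl (fun i _ => h i), Finset.sum_ite_mem, Finset.univ_inter]
    rw [step1]
    have hterm : ∀ i ∈ Ω, ‖a • (xh i - (s:ℝ)⁻¹ • ∑ j ∈ Ω, xh j)‖ ^ 2
        = a^2 * (‖xh i‖^2 - 2*((s:ℝ)⁻¹ * (inner ℝ (xh i) (∑ j ∈ Ω, xh j) : ℝ))
            + ((s:ℝ)⁻¹)^2 * ‖∑ j ∈ Ω, xh j‖^2) := by
      intro i _
      rw [norm_smul, mul_pow, Real.norm_eq_abs, sq_abs, norm_sub_sq_real,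
        real_inner_smul_right, norm_smul, mul_pow, Real.norm_eq_abs, sq_abs]
    rw [Finset.sum_congr rfl hterm, ← Finset.mul_sum]
    congr 1
    rw [Finset.sum_add_distrib, Finset.sum_sub_distrib, Finset.sum_const, hcard,
      nsmul_eq_mul]
    have h2 : ∑ i ∈ Ω, 2 * ((s:ℝ)⁻¹ * (inner ℝ (xh i) (∑ j ∈ Ω, xh j) : ℝ))
        = 2 * ((s:ℝ)⁻¹ * ‖∑ j ∈ Ω, xh j‖^2) := by
      rw [← Finset.mul_sum]
      congr 1
      rw [← Finset.mul_sum]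
      congr 1
      rw [← sum_inner, real_inner_self_eq_norm_sq]
    rw [h2]
    field_simp
    ring
  -- total
  have hDtotal : ∑ Ω ∈ K, ∑ i, ‖D Ω i‖ ^ 2
      = a^2 * (c1 * A - (s:ℝ)⁻¹ * (c1 * A + c2 * P)) := by
    rw [Finset.sum_congr rfl hDsum, ← Finset.mul_sum, Finset.sum_sub_distrib,
      sumA (fun j => ‖xh j‖ ^ 2), ← hA, ← Finset.mul_sum, sumB]
  -- mean
  have hmean : ∀ i : Fin n, (p * N⁻¹) • (∑ Ω ∈ K, D Ω i) = Wxh i := by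
    intro i
    have collapse : ∀ Ω : Finset (Fin n),
        ∑ j ∈ Ω, ∑ k ∈ Ω, (if j = i then xh k else 0)
          = (if i ∈ Ω then ∑ k ∈ Ω, xh k else 0) := by
      intro Ω
      have inner_c : ∀ j ∈ Ω, ∑ k ∈ Ω, (if j = i then xh k else 0)
          = if j = i then ∑ k ∈ Ω, xh k else 0 := by
        intro j _
        by_cases h : j = i <;> simp [h]
      rw [Finset.sum_congr rfl inner_c, Finset.sum_ite_eq' Ω i]
    have key : ∑ Ω ∈ K, (if i ∈ Ω then ∑ j ∈ Ω, xh j else 0)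
        = c1 • xh i + c2 • (S - xh i) := by
      rw [Finset.sum_congr rfl (fun Ω _ => (collapse Ω).symm), hK, tamuna_swap2]
      have outer : ∀ j : Fin n,
          (∑ k, ((((Finset.univ : Finset (Fin n)).powersetCard s).filter
              (fun Ω => j ∈ Ω ∧ k ∈ Ω)).card) • (if j = i then xh k else 0))
          = if j = i then (c1 • xh i + c2 • (S - xh i)) else 0 := by
        intro j
        by_cases h : j = i
        · subst h
          simp only [if_true]
          rw [← Finset.add_sum_erase _ _ (Finset.mem_univ j), ← hK, cntdiag j,
            Nat.cast_smul_eq_nsmul ℝ _ _ |>.symm, hc1def]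
          congr 1
          have : ∀ k ∈ Finset.univ.erase j,
              ((K.filter (fun Ω => j ∈ Ω ∧ k ∈ Ω)).card) • xh k = c2 • xh k := by
            intro k hk
            rw [cnt2 j k (Finset.ne_of_mem_erase hk).symm,
              ← Nat.cast_smul_eq_nsmul ℝ, ← hc2def]
          rw [Finset.sum_congr rfl this, ← Finset.smul_sum,
            Finset.sum_erase_eq_sub (Finset.mem_univ j), ← hS]
        · simp [h]
      rw [Finset.sum_congr rfl (fun j _ => outer j), Finset.sum_ite_eq' Finset.univ i]
      simp
    have hDi : ∀ Ω ∈ K, D Ω i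
        = (if i ∈ Ω then a • xh i else 0)
          - (a * (s:ℝ)⁻¹) • (if i ∈ Ω then (∑ j ∈ Ω, xh j) else 0) := by
      intro Ω _
      rw [hD]
      by_cases h : i ∈ Ω
      · simp only [h, if_true]
        rw [smul_sub, smul_smul]
      · simp [h]
    rw [Finset.sum_congr rfl hDi, Finset.sum_sub_distrib, ← Finset.smul_sum, key]
    have hsum_ite : ∑ Ω ∈ K, (if i ∈ Ω then a • xh i else 0)
        = c1 • (a • xh i) := by
      rw [← Finset.sum_filter, Finset.sum_const, ← Nat.cast_smul_eq_nsmul ℝ,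
        cnt1 i, hc1def]
    rw [hsum_ite, hWxh i]
    rw [e2, e1]
    subst ha
    match_scalars <;> field_simp <;> ring
  -- first conjunct
  have conj1 : p * (N⁻¹ * ∑ Ω ∈ K, ∑ i, ‖D Ω i‖ ^ 2)
      = (((n : ℝ) - 1) / (p * ((s : ℝ) - 1))) * ∑ i, ‖Wxh i‖ ^ 2 := by
    rw [hDtotal, hRW, e2, e1]
    subst ha
    field_simp
    ring
  refine ⟨conj1, ?_⟩
  -- second conjunct
  have hexp : ∀ i : Fin n, ∑ Ω ∈ K, ‖D Ω i - Wxh i‖ ^ 2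
      = (∑ Ω ∈ K, ‖D Ω i‖ ^ 2) - 2 * (inner ℝ (∑ Ω ∈ K, D Ω i) (Wxh i) : ℝ)
        + N * ‖Wxh i‖ ^ 2 := by
    intro i
    rw [Finset.sum_congr rfl (fun Ω _ => norm_sub_sq_real (D Ω i) (Wxh i)),
      Finset.sum_add_distrib, Finset.sum_sub_distrib, Finset.sum_const, nsmul_eq_mul,
      ← hNdef, ← Finset.mul_sum, ← sum_inner]
  have hinner : ∀ i : Fin n, (inner ℝ (∑ Ω ∈ K, D Ω i) (Wxh i) : ℝ)
      = (p * N⁻¹)⁻¹ * ‖Wxh i‖ ^ 2 := by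
    intro i
    have hpn : (p * N⁻¹) ≠ 0 := by
      apply mul_ne_zero hp (inv_ne_zero hN0)
    have := hmean i
    have h2 : ∑ Ω ∈ K, D Ω i = (p * N⁻¹)⁻¹ • Wxh i := by
      rw [← this, smul_smul, inv_mul_cancel₀ hpn, one_smul]
    rw [h2, real_inner_smul_left, real_inner_self_eq_norm_sq]
  have hzero : ∀ i : Fin n, ‖(0 : EuclideanSpace ℝ (Fin d)) - Wxh i‖ ^ 2
      = ‖Wxh i‖ ^ 2 := by
    intro i
    rw [zero_sub, norm_neg]
  rw [Finset.sum_congr rfl (fun i _ => hzero i)]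
  have sum_exp : ∑ i, ∑ Ω ∈ K, ‖D Ω i - Wxh i‖ ^ 2
      = (∑ Ω ∈ K, ∑ i, ‖D Ω i‖ ^ 2)
        - 2 * ((p * N⁻¹)⁻¹ * ∑ i, ‖Wxh i‖ ^ 2) + N * ∑ i, ‖Wxh i‖ ^ 2 := by
    rw [Finset.sum_congr rfl (fun i _ => by rw [hexp i, hinner i])]
    rw [Finset.sum_add_distrib, Finset.sum_sub_distrib, ← Finset.mul_sum,
      ← Finset.mul_sum, ← Finset.mul_sum, Finset.sum_comm]
  rw [Finset.sum_comm, sum_exp]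
  set W : ℝ := ∑ i, ‖Wxh i‖ ^ 2 with hW
  have hD2 : ∑ Ω ∈ K, ∑ i, ‖D Ω i‖ ^ 2
      = (((n : ℝ) - 1) / (p * ((s : ℝ) - 1))) * W / (p * N⁻¹) := by
    have := conj1
    field_simp at this ⊢
    linarith [this]
  rw [hD2, hω]
  field_simp
  ring
end

section
/- Let each f_i: ℝ^d → ℝ (i = 1,…,n) be convex and L-smooth, let x* be a minimizer of f = (1/n)∑_i f_i, and let x_1,…,x_n ∈ ℝ^d with x̄ = (1/n)∑_i x_i. Then ‖∇f(x̄)‖² ≤ (2L²/n)∑_{i=1}^n ‖x_i − x̄‖² + (4L/n)∑_{i=1}^n D_{f_i}(x_i, x*), where D_{f_i}(x, y) = f_i(x) − f_i(y) − ⟨∇f_i(y), x − y⟩. -/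
open scoped RealInnerProductSpace
open Finset

set_option maxHeartbeats 1000000

variable {E : Type*} [NormedAddCommGroup E] [InnerProductSpace ℝ E] [CompleteSpace E]

lemma hasDerivAt_line (f : E → ℝ) (hf : Differentiable ℝ f) (x v : E) (t : ℝ) :
    HasDerivAt (fun s : ℝ => f (x + s • v)) ⟪gradient f (x + t • v), v⟫ t := by
  have hline : HasDerivAt (fun s : ℝ => x + s • v) v t := by
    simpa using ((hasDerivAt_id t).smul_const v).const_add x
  have hgrad := (hf (x + t • v)).hasGradientAt
  rw [hasGradientAt_iff_hasFDerivAt] at hgrad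
  have h2 := hgrad.comp_hasDerivAt t hline
  simpa [Function.comp_def] using h2

lemma first_order (f : E → ℝ) (hf : Differentiable ℝ f) (hc : ConvexOn ℝ Set.univ f)
    (x y : E) : f x + ⟪gradient f x, y - x⟫ ≤ f y := by
  set v := y - x with hv
  have hg : ConvexOn ℝ Set.univ (fun s : ℝ => f (x + s • v)) := by
    have h := hc.comp_affineMap (AffineMap.lineMap x y)
    have : (fun s : ℝ => f (x + s • v)) = f ∘ (AffineMap.lineMap x y) := by
      funext s
      simp [AffineMap.lineMap_apply, hv]
      congr 1
      module
    rw [this]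
    simpa using h
  have hd := hasDerivAt_line f hf x v 0
  have hslope := hg.le_slope_of_hasDerivAt (Set.mem_univ (0:ℝ)) (Set.mem_univ (1:ℝ)) zero_lt_one (by simpa using hd)
  rw [slope_def_field] at hslope
  simp at hslope
  have h1 : x + v = y := by simp [hv]
  rw [h1] at hslope
  linarith [hslope, show ⟪gradient f x, v⟫ = (fderiv ℝ f x) v by simp]

lemma descent_lemma (f : E → ℝ) (hf : Differentiable ℝ f) (L : ℝ) (hL : 0 < L)
    (hlip : ∀ a b, ‖gradient f a - gradient f b‖ ≤ L * ‖a - b‖) (x y : E) :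
    f y ≤ f x + ⟪gradient f x, y - x⟫ + L / 2 * ‖y - x‖ ^ 2 := by
  set v := y - x with hv
  set h : ℝ → ℝ := fun t => f (x + t • v) - t * ⟪gradient f x, v⟫ - L * t ^ 2 * ‖v‖ ^ 2 / 2 with hh
  have hderiv : ∀ t : ℝ, HasDerivAt h
      (⟪gradient f (x + t • v), v⟫ - ⟪gradient f x, v⟫ - L * t * ‖v‖ ^ 2) t := by
    intro t
    have h1 := hasDerivAt_line f hf x v t
    have h2 : HasDerivAt (fun t : ℝ => t * ⟪gradient f x, v⟫) ⟪gradient f x, v⟫ t := by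
      simpa using (hasDerivAt_id t).mul_const (⟪gradient f x, v⟫)
    have h3 : HasDerivAt (fun t : ℝ => L * t ^ 2 * ‖v‖ ^ 2 / 2) (L * t * ‖v‖ ^ 2) t := by
      have h4 := (((hasDerivAt_pow 2 t).const_mul L).mul_const (‖v‖ ^ 2)).div_const 2
      rw [show L * t * ‖v‖ ^ 2 = L * (((2:ℕ):ℝ) * t ^ (2 - 1)) * ‖v‖ ^ 2 / 2 by push_cast; ring]
      exact h4
    exact (h1.sub h2).sub h3
  have hmono : AntitoneOn h (Set.Icc 0 1) := by
    apply antitoneOn_of_deriv_nonpos (convex_Icc 0 1)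
    · exact fun t _ => (hderiv t).continuousAt.continuousWithinAt
    · exact fun t _ => ((hderiv t).differentiableAt).differentiableWithinAt
    · intro t ht
      rw [interior_Icc] at ht
      rw [(hderiv t).deriv]
      have key : ⟪gradient f (x + t • v), v⟫ - ⟪gradient f x, v⟫ ≤ L * t * ‖v‖ ^ 2 := by
        rw [← inner_sub_left]
        calc ⟪gradient f (x + t • v) - gradient f x, v⟫
            ≤ ‖gradient f (x + t • v) - gradient f x‖ * ‖v‖ := real_inner_le_norm _ _
          _ ≤ (L * ‖(x + t • v) - x‖) * ‖v‖ := by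
              have := hlip (x + t • v) x
              nlinarith [norm_nonneg v]
          _ = L * t * ‖v‖ ^ 2 := by
              rw [add_sub_cancel_left, norm_smul, Real.norm_eq_abs, abs_of_pos ht.1]
              ring
      linarith
  have hle := hmono (Set.mem_Icc.mpr ⟨le_refl 0, zero_le_one⟩)
    (Set.mem_Icc.mpr ⟨zero_le_one, le_refl 1⟩) zero_le_one
  have h0 : h 0 = f x := by simp [hh]
  have h1 : h 1 = f y - ⟪gradient f x, v⟫ - L * ‖v‖ ^ 2 / 2 := by
    simp only [hh]
    rw [show x + (1:ℝ) • v = y by simp [hv]]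
    ring
  rw [h0, h1] at hle
  have : L / 2 * ‖v‖ ^ 2 = L * ‖v‖ ^ 2 / 2 := by ring
  linarith

lemma cocoercive (f : E → ℝ) (hf : Differentiable ℝ f) (hc : ConvexOn ℝ Set.univ f)
    (L : ℝ) (hL : 0 < L) (hlip : ∀ a b, ‖gradient f a - gradient f b‖ ≤ L * ‖a - b‖) (x y : E) :
    ‖gradient f x - gradient f y‖ ^ 2 ≤ 2 * L * (f x - f y - ⟪gradient f y, x - y⟫) := by
  set g := gradient f x - gradient f y with hg
  set w := x - L⁻¹ • g with hw
  have hB := descent_lemma f hf L hL hlip x w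
  have hA := first_order f hf hc y w
  have e1 : w - x = -(L⁻¹ • g) := by rw [hw]; abel
  have e2 : w - y = (x - y) - L⁻¹ • g := by rw [hw]; abel
  have e3 : ⟪gradient f x, w - x⟫ = -(L⁻¹ * ⟪gradient f x, g⟫) := by
    rw [e1, inner_neg_right, real_inner_smul_right]
  have e4 : ⟪gradient f y, w - y⟫ = ⟪gradient f y, x - y⟫ - L⁻¹ * ⟪gradient f y, g⟫ := by
    rw [e2, inner_sub_right, real_inner_smul_right]
  have e5 : ‖w - x‖ ^ 2 = L⁻¹ ^ 2 * ‖g‖ ^ 2 := by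
    rw [e1, norm_neg, norm_smul, Real.norm_eq_abs, mul_pow, sq_abs]
  have e6 : ⟪gradient f x, g⟫ - ⟪gradient f y, g⟫ = ‖g‖ ^ 2 := by
    rw [← inner_sub_left, ← hg, real_inner_self_eq_norm_sq]
  have hLinv : L * L⁻¹ = 1 := mul_inv_cancel₀ (ne_of_gt hL)
  rw [e3, e5] at hB
  rw [e4] at hA
  have h6' : L⁻¹ * ⟪gradient f x, g⟫ - L⁻¹ * ⟪gradient f y, g⟫ = L⁻¹ * ‖g‖ ^ 2 := by
    rw [← mul_sub, e6]
  have h7 : L⁻¹ * ‖g‖ ^ 2 - L / 2 * (L⁻¹ ^ 2 * ‖g‖ ^ 2)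
      ≤ f x - f y - ⟪gradient f y, x - y⟫ := by linarith
  calc ‖g‖ ^ 2 = (2 * L) * (L⁻¹ * ‖g‖ ^ 2 - L / 2 * (L⁻¹ ^ 2 * ‖g‖ ^ 2)) := by
        field_simp
        ring
    _ ≤ 2 * L * (f x - f y - ⟪gradient f y, x - y⟫) := by
        apply mul_le_mul_of_nonneg_left h7
        positivity
variable {E : Type*} [NormedAddCommGroup E] [InnerProductSpace ℝ E] [CompleteSpace E]

lemma hasGradientAt_avg {n : ℕ} (f : Fin n → E → ℝ) (hdiff : ∀ i, Differentiable ℝ (f i)) (p : E) :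
    HasGradientAt (fun x => (n : ℝ)⁻¹ * ∑ i, f i x)
      ((n : ℝ)⁻¹ • ∑ i, gradient (f i) p) p := by
  rw [hasGradientAt_iff_hasFDerivAt]
  have h : HasFDerivAt (fun x => ∑ i, f i x)
      (∑ i, (InnerProductSpace.toDual ℝ E) (gradient (f i) p)) p := by
    apply HasFDerivAt.fun_sum
    intro i _
    have hi := ((hdiff i) p).hasGradientAt
    rwa [hasGradientAt_iff_hasFDerivAt] at hi
  have h2 := h.const_smul ((n:ℝ)⁻¹)
  simpa [map_smul, map_sum, smul_eq_mul, Pi.smul_def] using h2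


/-- Bound on the full gradient at the average point:
`‖∇f(x̄)‖² ≤ (2L²/n)∑_i‖x_i − x̄‖² + (4L/n)∑_i D_{f_i}(x_i, x*)`, where
`f = (1/n)∑ f_i`, each `f_i` convex `L`-smooth, and `x*` minimizes `f`. -/
theorem grad_at_average_bound
    {d n : ℕ} (hn : 1 ≤ n)
    (f : Fin n → EuclideanSpace ℝ (Fin d) → ℝ) (L : ℝ) (hL : 0 < L)
    (hdiff : ∀ i, Differentiable ℝ (f i))
    (hconv : ∀ i, ConvexOn ℝ Set.univ (f i))
    (hsmooth : ∀ i x y, ‖gradient (f i) x - gradient (f i) y‖ ≤ L * ‖x - y‖)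
    (F : EuclideanSpace ℝ (Fin d) → ℝ) (hF : F = fun x => (n : ℝ)⁻¹ * ∑ i, f i x)
    (xstar : EuclideanSpace ℝ (Fin d)) (hmin : ∀ y, F xstar ≤ F y)
    (x : Fin n → EuclideanSpace ℝ (Fin d))
    (xbar : EuclideanSpace ℝ (Fin d)) (hxbar : xbar = (n : ℝ)⁻¹ • ∑ i, x i) :
    ‖gradient F xbar‖ ^ 2 ≤
      (2 * L ^ 2 / n) * ∑ i, ‖x i - xbar‖ ^ 2
      + (4 * L / n) * ∑ i,
          (f i (x i) - f i xstar - ⟪gradient (f i) xstar, x i - xstar⟫) := by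
  have hnpos : (0:ℝ) < n := by exact_mod_cast Nat.lt_of_lt_of_le Nat.zero_lt_one hn
  have hgF : ∀ p, HasGradientAt F ((n : ℝ)⁻¹ • ∑ i, gradient (f i) p) p := by
    intro p; rw [hF]; exact hasGradientAt_avg f hdiff p
  -- gradient of F vanishes at xstar
  have hgrad0 : gradient F xstar = 0 := by
    have hloc : IsLocalMin F xstar := Filter.Eventually.of_forall hmin
    have hfd0 : fderiv ℝ F xstar = 0 := hloc.fderiv_eq_zero
    have : gradient F xstar
        = (InnerProductSpace.toDual ℝ (EuclideanSpace ℝ (Fin d))).symm (fderiv ℝ F xstar) := rfl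
    rw [this, hfd0, map_zero]
  have hsum0 : ∑ i, gradient (f i) xstar = 0 := by
    have h1 := (hgF xstar).gradient
    rw [hgrad0] at h1
    have hne : ((n : ℝ)⁻¹ : ℝ) ≠ 0 := inv_ne_zero (ne_of_gt hnpos)
    rcases smul_eq_zero.mp h1.symm with h | h
    · exact absurd h hne
    · exact h
  set v : Fin n → EuclideanSpace ℝ (Fin d) :=
    fun i => gradient (f i) xbar - gradient (f i) xstar with hv
  have hgxbar : gradient F xbar = (n : ℝ)⁻¹ • ∑ i, v i := by
    rw [(hgF xbar).gradient, hv]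
    rw [Finset.sum_sub_distrib, hsum0, sub_zero]
  have hnorm : ‖gradient F xbar‖ ^ 2 ≤ (n : ℝ)⁻¹ * ∑ i, ‖v i‖ ^ 2 := by
    rw [hgxbar, norm_smul, Real.norm_eq_abs, abs_of_pos (inv_pos.mpr hnpos)]
    have h1 : ‖∑ i, v i‖ ≤ ∑ i, ‖v i‖ := norm_sum_le _ _
    have h2 : (∑ i, ‖v i‖) ^ 2 ≤ (n : ℝ) * ∑ i, ‖v i‖ ^ 2 := by
      have := sq_sum_le_card_mul_sum_sq (s := Finset.univ) (f := fun i => ‖v i‖)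
      simpa using this
    have h3 : ‖∑ i, v i‖ ^ 2 ≤ (∑ i, ‖v i‖) ^ 2 := by
      apply sq_le_sq' <;> nlinarith [norm_nonneg (∑ i, v i), Finset.sum_nonneg (fun i (_ : i ∈ Finset.univ) => norm_nonneg (v i))]
    calc ((n:ℝ)⁻¹ * ‖∑ i, v i‖) ^ 2 = (n:ℝ)⁻¹ ^ 2 * ‖∑ i, v i‖ ^ 2 := by ring
      _ ≤ (n:ℝ)⁻¹ ^ 2 * ((n : ℝ) * ∑ i, ‖v i‖ ^ 2) := by
          apply mul_le_mul_of_nonneg_left (le_trans h3 h2) (by positivity)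
      _ = (n:ℝ)⁻¹ * (((n:ℝ)⁻¹ * n) * ∑ i, ‖v i‖ ^ 2) := by ring
      _ = (n : ℝ)⁻¹ * ∑ i, ‖v i‖ ^ 2 := by
          rw [inv_mul_cancel₀ (ne_of_gt hnpos), one_mul]
  have hpt : ∀ i, ‖v i‖ ^ 2 ≤ 2 * L ^ 2 * ‖x i - xbar‖ ^ 2
      + 4 * L * (f i (x i) - f i xstar - ⟪gradient (f i) xstar, x i - xstar⟫) := by
    intro i
    set a := gradient (f i) xbar - gradient (f i) (x i) with ha
    set b := gradient (f i) (x i) - gradient (f i) xstar with hb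
    have hasm : ‖a‖ ≤ L * ‖xbar - x i‖ := hsmooth i _ _
    have hbsq : ‖b‖ ^ 2 ≤ 2 * L * (f i (x i) - f i xstar - ⟪gradient (f i) xstar, x i - xstar⟫) :=
      cocoercive (f i) (hdiff i) (hconv i) L hL (hsmooth i) (x i) xstar
    have tri : ‖v i‖ ≤ ‖a‖ + ‖b‖ := by
      rw [show v i = a + b by rw [hv, ha, hb]; abel]
      exact norm_add_le _ _
    have hrev : ‖xbar - x i‖ = ‖x i - xbar‖ := norm_sub_rev _ _
    have ha2 : ‖a‖ ^ 2 ≤ L ^ 2 * ‖x i - xbar‖ ^ 2 := by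
      rw [hrev] at hasm
      nlinarith [norm_nonneg a, norm_nonneg (x i - xbar), hL.le]
    nlinarith [norm_nonneg a, norm_nonneg b, norm_nonneg (v i), sq_nonneg (‖a‖ - ‖b‖)]
  have hsum : ∑ i, ‖v i‖ ^ 2 ≤ 2 * L ^ 2 * ∑ i, ‖x i - xbar‖ ^ 2
      + 4 * L * ∑ i, (f i (x i) - f i xstar - ⟪gradient (f i) xstar, x i - xstar⟫) := by
    rw [Finset.mul_sum, Finset.mul_sum, ← Finset.sum_add_distrib]
    exact Finset.sum_le_sum fun i _ => hpt i
  calc ‖gradient F xbar‖ ^ 2 ≤ (n : ℝ)⁻¹ * ∑ i, ‖v i‖ ^ 2 := hnorm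
    _ ≤ (n : ℝ)⁻¹ * (2 * L ^ 2 * ∑ i, ‖x i - xbar‖ ^ 2
        + 4 * L * ∑ i, (f i (x i) - f i xstar - ⟪gradient (f i) xstar, x i - xstar⟫)) := by
        apply mul_le_mul_of_nonneg_left hsum (by positivity)
    _ = (2 * L ^ 2 / n) * ∑ i, ‖x i - xbar‖ ^ 2
      + (4 * L / n) * ∑ i, (f i (x i) - f i xstar - ⟪gradient (f i) xstar, x i - xstar⟫) := by
        ring
end
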